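/- Let H be a simply connected combinatorial strata structure endowed with a datum (N, {P_J}) of nodal strata, and let B be a nodal separating block of N in H. Then for every i ∈ I and every {j} ∈ B_B(i), there is a 1-path γ in H joining {i} and {j} such that κ_B(γ) = 1. -/

import Mathlib

/-- A combinatorial strata structure with minimal set of indices the (finite) type `I`:
an open subset of `𝒫(I)` (i.e. a family closed under taking subsets) containing all
singletons. -/
def IsCSS {I : Type*} (H : Set (Finset I)) : Prop :=
  (∀ J ∈ H, ∀ J' : Finset I, J' ⊆ J → J' ∈ H) ∧ ∀ i : I, ({i} : Finset I) ∈ H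

/-- `level H k` is `H(k)`, the set of strata of `H` with exactly `k` elements. -/
def level {I : Type*} (H : Set (Finset I)) (k : ℕ) : Set (Finset I) :=
  {J ∈ H | J.card = k}

/-- A `k`-path in `H`: a nonempty sequence of strata of `H(k)` such that the union of
any two consecutive entries lies in `H(k+1)`. -/
def IsKPath {I : Type*} [DecidableEq I] (H : Set (Finset I)) (k : ℕ)
    (γ : List (Finset I)) : Prop :=
  γ ≠ [] ∧ (∀ J ∈ γ, J ∈ level H k) ∧
    γ.Chain' fun J J' => (J ∪ J') ∈ level H (k + 1)

/-- The path `γ` joins `J` and `J'`. -/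
def Joins {I : Type*} (γ : List (Finset I)) (J J' : Finset I) : Prop :=
  γ.head? = some J ∧ γ.getLast? = some J'

/-- The subsupport of a path: the sequence of unions of consecutive entries. -/
def subSup {I : Type*} [DecidableEq I] (γ : List (Finset I)) : List (Finset I) :=
  List.zipWith (· ∪ ·) γ γ.tail

open Classical in
/-- `kappa B γ`: the number of entries of the subsupport of `γ` that belong to `B`. -/
noncomputable def kappa {I : Type*} [DecidableEq I] (B : Set (Finset I))
    (γ : List (Finset I)) : ℕ :=
  (subSup γ).countP fun J => decide (J ∈ B)

/-- `A` is `k`-connected in `H`: any two elements of `A` are joined by a `k`-path in `H`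
with support contained in `A`. -/
def KConnectedIn {I : Type*} [DecidableEq I] (H : Set (Finset I)) (k : ℕ)
    (A : Set (Finset I)) : Prop :=
  ∀ J ∈ A, ∀ J' ∈ A, ∃ γ : List (Finset I),
    IsKPath H k γ ∧ Joins γ J J' ∧ ∀ K ∈ γ, K ∈ A

/-- `C` is a `k`-connected component of `A` in `H`: a maximal nonempty `k`-connected
subset of `A`. -/
def IsKComponent {I : Type*} [DecidableEq I] (H : Set (Finset I)) (k : ℕ)
    (A C : Set (Finset I)) : Prop :=
  C.Nonempty ∧ C ⊆ A ∧ KConnectedIn H k C ∧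
    ∀ C' : Set (Finset I), C ⊆ C' → C' ⊆ A → KConnectedIn H k C' → C' = C

/-- `H` is 1-connected: `H(1)` is 1-connected in `H`. -/
def OneConnected {I : Type*} [DecidableEq I] (H : Set (Finset I)) : Prop :=
  KConnectedIn H 1 (level H 1)

/-- One-sided version of an elementary homotopic pair of 1-paths in `H`. -/
def ElemPairCore {I : Type*} [DecidableEq I] (H : Set (Finset I))
    (ε ε' : List (Finset I)) : Prop :=
  ε = ε'
  ∨ (∃ i₁ i₂ : I, ε = [{i₁}, {i₂}, {i₁}] ∧ ε' = [{i₁}])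
  ∨ (∃ i₁ i₂ i₃ : I, ε = [{i₁}, {i₂}] ∧ ε' = [{i₁}, {i₃}, {i₂}] ∧
      IsKPath H 2 [{i₁, i₃}, {i₃, i₂}])

/-- An elementary homotopic pair of 1-paths in `H` (up to swapping the two paths). -/
def ElemPair {I : Type*} [DecidableEq I] (H : Set (Finset I))
    (ε ε' : List (Finset I)) : Prop :=
  ElemPairCore H ε ε' ∨ ElemPairCore H ε' ε

/-- `γ₂` is obtained from `γ₁` by an elementary homotopy. -/
def ElemHomotopy {I : Type*} [DecidableEq I] (H : Set (Finset I))
    (γ₁ γ₂ : List (Finset I)) : Prop :=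
  ∃ δ ε₁ ε₂ ρ : List (Finset I),
    ElemPair H ε₁ ε₂ ∧ γ₁ = δ ++ ε₁ ++ ρ ∧ γ₂ = δ ++ ε₂ ++ ρ

/-- `γ` and `γ'` are homotopically equivalent in `H` with support in `A`: they are linked
by a finite chain of elementary homotopies in which every intermediate 1-path has
support in `A`. -/
def HomotopicIn {I : Type*} [DecidableEq I] (H A : Set (Finset I))
    (γ γ' : List (Finset I)) : Prop :=
  (IsKPath H 1 γ ∧ ∀ J ∈ γ, J ∈ A) ∧
    Relation.ReflTransGen
      (fun g₁ g₂ => ElemHomotopy H g₁ g₂ ∧ IsKPath H 1 g₂ ∧ ∀ J ∈ g₂, J ∈ A) γ γ'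

/-- A 1-connected subset `A ⊆ H(1)` is simply connected in `H`: any two 1-paths in `H`
with support in `A` joining the same strata are homotopically equivalent in `H` with
support in `A`. -/
def SimplyConnectedIn {I : Type*} [DecidableEq I] (H A : Set (Finset I)) : Prop :=
  KConnectedIn H 1 A ∧
    ∀ γ γ' : List (Finset I), IsKPath H 1 γ → IsKPath H 1 γ' →
      (∀ J ∈ γ, J ∈ A) → (∀ J ∈ γ', J ∈ A) →
      γ.head? = γ'.head? → γ.getLast? = γ'.getLast? →
      HomotopicIn H A γ γ'

/-- `H` is simply connected: `H(1)` is simply connected in `H`. -/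
def SimplyConnected {I : Type*} [DecidableEq I] (H : Set (Finset I)) : Prop :=
  SimplyConnectedIn H (level H 1)

/-- The closure of `A` in `H`: the strata of `H` containing some element of `A`. -/
def Cl {I : Type*} (H A : Set (Finset I)) : Set (Finset I) :=
  {J' ∈ H | ∃ J ∈ A, J ⊆ J'}

/-- A datum of nodal strata `(N, {P_J})` in `H`: a subset `N ⊆ H` together with, for each
`J ∈ N`, a partition `P_J = {J₊, J₋}` of `J` into two nonempty parts, such that for every
`J ∈ N` and `J' ⊆ J` one has `J' ∈ N` iff `J' ∩ J₊ ≠ ∅ ≠ J' ∩ J₋`, and in that case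
`P_{J'} = {J' ∩ J₊, J' ∩ J₋}`. -/
structure NodalDatum {I : Type*} [DecidableEq I] (H : Set (Finset I)) : Type _ where
  N : Set (Finset I)
  N_sub : N ⊆ H
  plus : Finset I → Finset I
  minus : Finset I → Finset I
  plus_nonempty : ∀ J ∈ N, (plus J).Nonempty
  minus_nonempty : ∀ J ∈ N, (minus J).Nonempty
  union_eq : ∀ J ∈ N, plus J ∪ minus J = J
  disj : ∀ J ∈ N, Disjoint (plus J) (minus J)
  mem_iff : ∀ J ∈ N, ∀ J' : Finset I, J' ⊆ J →
    (J' ∈ N ↔ (J' ∩ plus J).Nonempty ∧ (J' ∩ minus J).Nonempty)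
  part_eq : ∀ J ∈ N, ∀ J' : Finset I, J' ⊆ J → J' ∈ N →
    ({plus J', minus J'} : Set (Finset I)) = {J' ∩ plus J, J' ∩ minus J}

/-- `N*`: the set of uninterrupted nodal strata, i.e. `J ∈ N` with `Cl_H({J}) ⊆ N`. -/
def Nstar {I : Type*} [DecidableEq I] {H : Set (Finset I)} (D : NodalDatum H) :
    Set (Finset I) :=
  {J ∈ D.N | ∀ J' ∈ H, J ⊆ J' → J' ∈ D.N}

/-- A nodal block of `N` in `H`: a 2-connected component of `N(2) = N ∩ H(2)` in `H`. -/
def IsNodalBlock {I : Type*} [DecidableEq I] {H : Set (Finset I)} (D : NodalDatum H)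
    (B : Set (Finset I)) : Prop :=
  IsKComponent H 2 (D.N ∩ level H 2) B

/-- A nodal separating block: a nodal block contained in `N*`. -/
def IsSepBlock {I : Type*} [DecidableEq I] {H : Set (Finset I)} (D : NodalDatum H)
    (B : Set (Finset I)) : Prop :=
  IsNodalBlock D B ∧ B ⊆ Nstar D

/-- The separator set: the union of all nodal separating blocks. -/
def SepSet {I : Type*} [DecidableEq I] {H : Set (Finset I)} (D : NodalDatum H) :
    Set (Finset I) :=
  ⋃₀ {B | IsSepBlock D B}

/-- `A_B(i)`: the set of `{j} ∈ H(1)` joined to `{i}` by a 1-path `γ` in `H` with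
`κ_B(γ)` even. -/
def ABset {I : Type*} [DecidableEq I] (H B : Set (Finset I)) (i : I) : Set (Finset I) :=
  {J ∈ level H 1 | ∃ γ : List (Finset I),
    IsKPath H 1 γ ∧ Joins γ {i} J ∧ Even (kappa B γ)}

/-- `B_B(i)`: the set of `{j} ∈ H(1)` joined to `{i}` by a 1-path `γ` in `H` with
`κ_B(γ)` odd. -/
def BBset {I : Type*} [DecidableEq I] (H B : Set (Finset I)) (i : I) : Set (Finset I) :=
  {J ∈ level H 1 | ∃ γ : List (Finset I),
    IsKPath H 1 γ ∧ Joins γ {i} J ∧ Odd (kappa B γ)}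

section Aux
open scoped Classical
variable {I : Type*} [DecidableEq I]

lemma aux_kappa_nil (B : Set (Finset I)) : kappa B ([] : List (Finset I)) = 0 := rfl
lemma aux_kappa_single (B : Set (Finset I)) (x : Finset I) : kappa B [x] = 0 := rfl

lemma aux_kappa_cons (B : Set (Finset I)) (x y : Finset I) (t : List (Finset I)) :
    kappa B (x :: y :: t) = (if x ∪ y ∈ B then 1 else 0) + kappa B (y :: t) := by
  classical
  show ((x ∪ y) :: subSup (y :: t)).countP _ = _
  rw [List.countP_cons]
  simp only [decide_eq_true_iff]
  rw [Nat.add_comm]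
  rfl

lemma aux_kappa_append (B : Set (Finset I)) :
    ∀ (p q : List (Finset I)) (x y : Finset I), p.getLast? = some x → q.head? = some y →
    kappa B (p ++ q) = kappa B p + (if x ∪ y ∈ B then 1 else 0) + kappa B q := by
  intro p
  induction p with
  | nil => intro q x y hx; simp at hx
  | cons a t ih =>
    intro q x y hx hy
    cases t with
    | nil =>
      simp only [List.getLast?_singleton, Option.some.injEq] at hx
      subst hx
      cases q with
      | nil => simp at hy
      | cons b s =>
        simp only [List.head?_cons, Option.some.injEq] at hy
        subst hy
        rw [List.singleton_append, aux_kappa_cons, aux_kappa_single]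
        ring
    | cons b s =>
      have hx' : (b :: s).getLast? = some x := by
        rw [← hx]; rfl
      have : (a :: b :: s) ++ q = a :: ((b :: s) ++ q) := rfl
      rw [this, List.cons_append, aux_kappa_cons, ← List.cons_append, ih q x y hx' hy,
        aux_kappa_cons]
      ring

lemma aux_getLast?_append {α : Type*} (l₁ : List α) {l₂ : List α} (h : l₂ ≠ []) :
    (l₁ ++ l₂).getLast? = l₂.getLast? := by
  rw [List.getLast?_append]
  obtain ⟨a, ha⟩ := Option.isSome_iff_exists.mp (List.getLast?_isSome.mpr h)
  simp [ha]

lemma aux_head?_append {α : Type*} {l₁ : List α} (l₂ : List α) (h : l₁ ≠ []) :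
    (l₁ ++ l₂).head? = l₁.head? := by
  cases l₁ with | nil => simp at h | cons a t => simp

lemma aux_path_of_append_left {H : Set (Finset I)} {k : ℕ} {p q : List (Finset I)}
    (h : IsKPath H k (p ++ q)) (hp : p ≠ []) : IsKPath H k p := by
  obtain ⟨-, hmem, hch⟩ := h
  exact ⟨hp, fun J hJ => hmem J (List.mem_append_left _ hJ), (List.isChain_append.mp hch).1⟩

lemma aux_path_of_append_right {H : Set (Finset I)} {k : ℕ} {p q : List (Finset I)}
    (h : IsKPath H k (p ++ q)) (hq : q ≠ []) : IsKPath H k q := by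
  obtain ⟨-, hmem, hch⟩ := h
  exact ⟨hq, fun J hJ => hmem J (List.mem_append_right _ hJ), (List.isChain_append.mp hch).2.1⟩

lemma aux_path_reverse {H : Set (Finset I)} {k : ℕ} {p : List (Finset I)}
    (h : IsKPath H k p) : IsKPath H k p.reverse := by
  obtain ⟨hne, hmem, hch⟩ := h
  refine ⟨by simpa using hne, fun J hJ => hmem J (by simpa using hJ), ?_⟩
  show List.IsChain _ _; rw [List.isChain_reverse]
  refine hch.imp ?_
  intro a b hab
  rwa [Finset.union_comm]

omit [DecidableEq I] in
lemma aux_joins_reverse {p : List (Finset I)} {X Y : Finset I}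
    (h : Joins p X Y) : Joins p.reverse Y X := by
  obtain ⟨h1, h2⟩ := h
  exact ⟨by rwa [List.head?_reverse], by rwa [List.getLast?_reverse]⟩

/-- Composition of paths sharing an endpoint. -/
lemma aux_comp_spec (B : Set (Finset I)) {H : Set (Finset I)} {p q : List (Finset I)}
    {x : Finset I} (hp : IsKPath H 1 p) (hq : IsKPath H 1 q)
    (hx : p.getLast? = some x) (hy : q.head? = some x) :
    IsKPath H 1 (p ++ q.tail) ∧ kappa B (p ++ q.tail) = kappa B p + kappa B q ∧
      (p ++ q.tail).head? = p.head? ∧ (p ++ q.tail).getLast? = q.getLast? := by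
  obtain ⟨hpne, hpmem, hpch⟩ := hp
  obtain ⟨hqne, hqmem, hqch⟩ := hq
  cases q with
  | nil => simp at hqne
  | cons a s =>
    simp only [List.head?_cons, Option.some.injEq] at hy
    subst hy
    cases s with
    | nil =>
      simp only [List.tail_cons, List.append_nil]
      exact ⟨⟨hpne, hpmem, hpch⟩, by rw [aux_kappa_single]; ring, by simp, by simp [hx]⟩
    | cons b s' =>
      have hq' : (b :: s').head? = some b := rfl
      constructor
      · refine ⟨by simp [hpne], ?_, ?_⟩
        · intro J hJ
          rcases List.mem_append.mp hJ with h | h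
          · exact hpmem J h
          · exact hqmem J (List.mem_cons_of_mem _ h)
        · show List.IsChain _ _; rw [List.isChain_append]
          refine ⟨hpch, (List.isChain_cons_cons.mp hqch).2, ?_⟩
          intro u hu v hv
          rw [hx] at hu
          simp only [List.tail_cons, List.head?_cons, Option.mem_def,
            Option.some.injEq] at hu hv
          subst hu; subst hv
          exact (List.isChain_cons_cons.mp hqch).1
      refine ⟨?_, aux_head?_append _ hpne, aux_getLast?_append _ (by simp)⟩
      rw [List.tail_cons, aux_kappa_append B p (b :: s') a b hx rfl, aux_kappa_cons]
      ring

/-- Split a path at its first `B`-crossing. -/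
lemma aux_split {H : Set (Finset I)} (B : Set (Finset I)) :
    ∀ γ : List (Finset I), IsKPath H 1 γ → 1 ≤ kappa B γ →
    ∃ (α ρ : List (Finset I)) (a b : Finset I),
      γ = α ++ ρ ∧ α ≠ [] ∧ ρ ≠ [] ∧ α.getLast? = some a ∧ ρ.head? = some b ∧
      a ∪ b ∈ B ∧ kappa B α = 0 ∧ kappa B γ = kappa B ρ + 1 := by
  intro γ
  induction γ with
  | nil => intro h; exact absurd rfl h.1
  | cons x t ih =>
    intro hpath hk
    cases t with
    | nil => rw [aux_kappa_single] at hk; omega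
    | cons y t' =>
      by_cases hxy : x ∪ y ∈ B
      · refine ⟨[x], y :: t', x, y, rfl, by simp, by simp, rfl, rfl, hxy,
          aux_kappa_single B x, ?_⟩
        rw [aux_kappa_cons, if_pos hxy]; ring
      · have hk' : kappa B (x :: y :: t') = kappa B (y :: t') := by
          rw [aux_kappa_cons, if_neg hxy, Nat.zero_add]
        have hpath' : IsKPath H 1 (y :: t') :=
          aux_path_of_append_right (p := [x]) (by simpa using hpath) (by simp)
        obtain ⟨α, ρ, a, b, heq, hαne, hρne, ha, hb, hab, hκα, hκ⟩ :=
          ih hpath' (by omega)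
        refine ⟨x :: α, ρ, a, b, by rw [List.cons_append, ← heq], by simp, hρne, ?_, hb,
          hab, ?_, by omega⟩
        · rw [show x :: α = [x] ++ α from rfl, aux_getLast?_append _ hαne, ha]
        · have hhead : α.head? = some y := by
            have := aux_head?_append (l₁ := α) ρ hαne
            rw [← heq] at this
            simp only [List.head?_cons] at this
            exact this.symm
          cases α with
          | nil => simp at hαne
          | cons z s =>
            simp only [List.head?_cons, Option.some.injEq] at hhead
            subst hhead
            rw [aux_kappa_cons, if_neg hxy, hκα]
end Aux


/-- An `N(2)`-edge joined to an edge of a nodal block by a 2-path lies in the block. -/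
lemma aux_absorb {I : Type*} [DecidableEq I] {H : Set (Finset I)} {D : NodalDatum H}
    {B : Set (Finset I)} (hB : IsNodalBlock D B) {f g : Finset I} (hf : f ∈ B)
    (hg : g ∈ D.N ∩ level H 2) (hfg : f ∪ g ∈ level H (2 + 1)) : g ∈ B := by
  obtain ⟨hne, hsub, hconn, hmax⟩ := hB
  have hgB : g ∈ B ∪ {g} := Or.inr rfl
  have key : B ∪ {g} = B := by
    apply hmax
    · exact Set.subset_union_left
    · intro x hx
      rcases hx with hx | hx
      · exact hsub hx
      · rw [Set.mem_singleton_iff] at hx; subst hx; exact hg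
    · -- connectivity of B ∪ {g}
      have tog : ∀ x ∈ B, ∃ γ : List (Finset I), IsKPath H 2 γ ∧ Joins γ x g ∧
          ∀ K ∈ γ, K ∈ B ∪ {g} := by
        intro x hx
        obtain ⟨γ, hγ, hj, hsupp⟩ := hconn x hx f hf
        refine ⟨γ ++ [g], ?_, ?_, ?_⟩
        · obtain ⟨hγne, hγmem, hγch⟩ := hγ
          refine ⟨by simp, ?_, ?_⟩
          · intro J hJ
            rcases List.mem_append.mp hJ with h | h
            · exact hγmem J h
            · simp only [List.mem_singleton] at h; subst h
              exact ⟨(D.N_sub hg.1), hg.2.2⟩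
          · show List.IsChain _ _; rw [List.isChain_append]
            refine ⟨hγch, List.isChain_singleton g, ?_⟩
            intro u hu v hv
            rw [hj.2] at hu
            simp only [List.head?_cons, Option.mem_def, Option.some.injEq] at hu hv
            subst hu; subst hv
            exact hfg
        · exact ⟨by rw [aux_head?_append _ hγ.1, hj.1], by rw [aux_getLast?_append _ (by simp)]; rfl⟩
        · intro K hK
          rcases List.mem_append.mp hK with h | h
          · exact Or.inl (hsupp K h)
          · simp only [List.mem_singleton] at h; subst h; exact Or.inr rfl
      intro x hx y hy
      rcases hx with hx | hx
      · rcases hy with hy | hy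
        · obtain ⟨γ, h1, h2, h3⟩ := hconn x hx y hy
          exact ⟨γ, h1, h2, fun K hK => Or.inl (h3 K hK)⟩
        · rw [Set.mem_singleton_iff] at hy; subst hy
          exact tog x hx
      · rw [Set.mem_singleton_iff] at hx
        rcases hy with hy | hy
        · obtain ⟨γ, h1, h2, h3⟩ := tog y hy
          refine ⟨γ.reverse, aux_path_reverse h1, ?_,
            fun K hK => h3 K (by simpa using hK)⟩
          rw [hx]; exact aux_joins_reverse h2
        · rw [Set.mem_singleton_iff] at hy
          refine ⟨[g], ⟨by simp, ?_, List.isChain_singleton g⟩,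
            ⟨by simp [hx], by simp [hy]⟩, fun K hK => Or.inr (by simpa using hK)⟩
          intro J hJ
          simp only [List.mem_singleton] at hJ; subst hJ
          exact ⟨D.N_sub hg.1, hg.2.2⟩
  rw [← key]; exact hgB

lemma aux_nedge_core {I : Type*} [DecidableEq I] {T P M : Finset I} {N : Set (Finset I)}
    (hU : P ∪ M = T) (hd : Disjoint P M) (hP : P.card = 1)
    (hcrit : ∀ g : Finset I, g ⊆ T → (g ∈ N ↔ (g ∩ P).Nonempty ∧ (g ∩ M).Nonempty)) :
    ∃ z ∈ T, ∀ g : Finset I, g ⊆ T → g.card = 2 → (g ∈ N ↔ z ∈ g) := by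
  obtain ⟨z, hz⟩ := Finset.card_eq_one.mp hP
  subst hz
  refine ⟨z, by rw [← hU]; exact Finset.mem_union_left _ (Finset.mem_singleton_self z), ?_⟩
  intro g hg hg2
  rw [hcrit g hg]
  constructor
  · rintro ⟨⟨u, hu⟩, -⟩
    rw [Finset.mem_inter, Finset.mem_singleton] at hu
    rw [← hu.2]; exact hu.1
  · intro hzg
    refine ⟨⟨z, Finset.mem_inter.mpr ⟨hzg, Finset.mem_singleton_self z⟩⟩, ?_⟩
    by_contra hemp
    rw [Finset.not_nonempty_iff_eq_empty] at hemp
    have : g ⊆ {z} := by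
      intro u hu
      have huT : u ∈ ({z} : Finset I) ∪ M := by rw [hU]; exact hg hu
      rcases Finset.mem_union.mp huT with h | h
      · exact h
      · exact absurd (Finset.mem_inter.mpr ⟨hu, h⟩) (by simp [hemp])
    have := Finset.card_le_card this
    simp [hg2] at this

/-- The 2-subsets of a nodal stratum of cardinality 3 that lie in `N` are
exactly those containing a distinguished vertex. -/
lemma aux_nedge {I : Type*} [DecidableEq I] {H : Set (Finset I)} (D : NodalDatum H)
    {T : Finset I} (hT : T ∈ D.N) (hcard : T.card = 3) :
    ∃ z ∈ T, ∀ g : Finset I, g ⊆ T → g.card = 2 → (g ∈ D.N ↔ z ∈ g) := by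
  have hU := D.union_eq T hT
  have hd := D.disj T hT
  have hcards : (D.plus T).card + (D.minus T).card = 3 := by
    rw [← Finset.card_union_of_disjoint hd, hU, hcard]
  have hpne := Finset.card_pos.mpr (D.plus_nonempty T hT)
  have hmne := Finset.card_pos.mpr (D.minus_nonempty T hT)
  have hcase : (D.plus T).card = 1 ∨ (D.minus T).card = 1 := by omega
  rcases hcase with h1 | h1
  · exact aux_nedge_core hU hd h1 (fun g hg => D.mem_iff T hT g hg)
  · refine aux_nedge_core (M := D.plus T) (by rw [Finset.union_comm]; exact hU)
      hd.symm h1 (fun g hg => ?_)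
    rw [D.mem_iff T hT g hg, and_comm]


/-- Walking along a 2-path inside a nodal separating block on one side. -/
lemma aux_walk {I : Type*} [DecidableEq I] {H : Set (Finset I)} (hH : IsCSS H)
    {D : NodalDatum H} {B : Set (Finset I)} (hB : IsSepBlock D B) :
    ∀ φ : List (Finset I), IsKPath H 2 φ → (∀ f ∈ φ, f ∈ B) →
    ∀ a f₀ : Finset I, φ.head? = some f₀ → a ⊆ f₀ → a.card = 1 →
    ∃ (c : Finset I) (π : List (Finset I)), IsKPath H 1 π ∧ Joins π a c ∧
      kappa B π = 0 ∧ c.card = 1 ∧ ∀ f' : Finset I, φ.getLast? = some f' → c ⊆ f' := by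
  intro φ
  induction φ with
  | nil => intro h; exact absurd rfl h.1
  | cons f t ih =>
    intro hpath hsupp a f₀ hhead ha ha1
    simp only [List.head?_cons, Option.some.injEq] at hhead
    subst hhead
    have hfH : f ∈ H := (hpath.2.1 f (List.mem_cons_self)).1
    have haH : a ∈ level H 1 := ⟨hH.1 f hfH a ha, ha1⟩
    cases t with
    | nil =>
      refine ⟨a, [a], ⟨by simp, ?_, List.isChain_singleton a⟩, ⟨rfl, rfl⟩, rfl, ha1, ?_⟩
      · intro J hJ; simp only [List.mem_singleton] at hJ; subst hJ; exact haH
      · intro f' hf'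
        simp only [List.getLast?_singleton, Option.some.injEq] at hf'
        subst hf'; exact ha
    | cons f₁ t' =>
      have hpath' : IsKPath H 2 (f₁ :: t') :=
        aux_path_of_append_right (p := [f]) (by simpa using hpath) (by simp)
      have hsupp' : ∀ f ∈ f₁ :: t', f ∈ B := fun f hf => hsupp f (List.mem_cons_of_mem _ hf)
      by_cases hcase : a ⊆ f₁
      · obtain ⟨c, π, h1, h2, h3, h4, h5⟩ := ih hpath' hsupp' a f₁ rfl hcase ha1
        exact ⟨c, π, h1, h2, h3, h4,
          fun f' hf' => h5 f' (by rwa [List.getLast?_cons_cons] at hf')⟩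
      · have hT : f ∪ f₁ ∈ level H (2 + 1) := (List.isChain_cons_cons.mp hpath.2.2).1
        have hTH : f ∪ f₁ ∈ H := hT.1
        have hT3 : (f ∪ f₁).card = 3 := hT.2
        have hfB : f ∈ B := hsupp f (List.mem_cons_self)
        have hf₁B : f₁ ∈ B := hsupp f₁ (List.mem_cons_of_mem _ (List.mem_cons_self))
        have hsubN := hB.1.2.1
        have hTN : f ∪ f₁ ∈ D.N := (hB.2 hfB).2 _ hTH Finset.subset_union_left
        obtain ⟨z, hzT, hzcrit⟩ := aux_nedge D hTN hT3
        have hfN : z ∈ f :=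
          (hzcrit f Finset.subset_union_left (hsubN hfB).2.2).mp (hsubN hfB).1
        have hf₁N : z ∈ f₁ :=
          (hzcrit f₁ Finset.subset_union_right (hsubN hf₁B).2.2).mp (hsubN hf₁B).1
        obtain ⟨v, hv⟩ := Finset.card_eq_one.mp ha1
        subst hv
        have hvf : v ∈ f := ha (Finset.mem_singleton_self v)
        have hvf₁ : v ∉ f₁ := fun h => hcase (Finset.singleton_subset_iff.mpr h)
        have hcard₁ : (f₁ \ f).card = 1 := by
          have h1 : (f₁ \ f) = (f ∪ f₁) \ f := by
            ext u; simp only [Finset.mem_sdiff, Finset.mem_union]; tauto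
          have h2 : ((f ∪ f₁) \ f).card = 3 - 2 := by
            rw [Finset.card_sdiff_of_subset Finset.subset_union_left, hT3, (hsubN hfB).2.2]
          rw [h1, h2]
        obtain ⟨w, hw⟩ := Finset.card_eq_one.mp hcard₁
        have hwmem : w ∈ f₁ \ f := by rw [hw]; exact Finset.mem_singleton_self w
        have hwf₁ : w ∈ f₁ := (Finset.mem_sdiff.mp hwmem).1
        have hwf : w ∉ f := (Finset.mem_sdiff.mp hwmem).2
        have hvw : v ≠ w := fun h => hwf (h ▸ hvf)
        have hzv : z ≠ v := fun h => hvf₁ (h ▸ hf₁N)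
        have hzw : z ≠ w := fun h => hwf (h ▸ hfN)
        have hgT : ({v} ∪ {w} : Finset I) ⊆ f ∪ f₁ := by
          intro u hu
          rcases Finset.mem_union.mp hu with h | h
          · rw [Finset.mem_singleton] at h; subst h; exact Finset.mem_union_left _ hvf
          · rw [Finset.mem_singleton] at h; subst h; exact Finset.mem_union_right _ hwf₁
        have hg2 : ({v} ∪ {w} : Finset I).card = 2 := by
          rw [show ({v} ∪ {w} : Finset I) = {v, w} by rfl]
          exact Finset.card_pair hvw
        have hgN : ({v} ∪ {w} : Finset I) ∉ D.N := by
          intro hgN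
          have := (hzcrit _ hgT hg2).mp hgN
          simp only [Finset.mem_union, Finset.mem_singleton] at this
          rcases this with h | h
          exacts [hzv h, hzw h]
        have hgB : ({v} ∪ {w} : Finset I) ∉ B := fun h => hgN (hsubN h).1
        have hgH : ({v} ∪ {w} : Finset I) ∈ level H 2 := ⟨hH.1 _ hTH _ hgT, hg2⟩
        obtain ⟨c, π, h1, h2, h3, h4, h5⟩ := ih hpath' hsupp' {w} f₁ rfl
          (Finset.singleton_subset_iff.mpr hwf₁) (Finset.card_singleton w)
        have hπne := h1.1
        have hπhead : π.head? = some {w} := h2.1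
        refine ⟨c, {v} :: π, ?_, ⟨rfl, ?_⟩, ?_, h4,
          fun f' hf' => h5 f' (by rwa [List.getLast?_cons_cons] at hf')⟩
        · refine ⟨by simp, ?_, ?_⟩
          · intro J hJ
            rcases List.mem_cons.mp hJ with h | h
            · subst h; exact haH
            · exact h1.2.1 J h
          · show List.IsChain _ _; rw [List.isChain_cons]
            refine ⟨?_, h1.2.2⟩
            intro y hy
            rw [hπhead] at hy
            simp only [Option.mem_def, Option.some.injEq] at hy
            subst hy
            exact hgH
        · cases π with
          | nil => exact absurd rfl hπne
          | cons p ps => rw [List.getLast?_cons_cons]; exact h2.2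
        · cases π with
          | nil => exact absurd rfl hπne
          | cons p ps =>
            have hp : p = {w} := by simpa using hπhead
            subst hp
            rw [aux_kappa_cons, if_neg hgB, h3]

/-- From a vertex of an edge of `B` one can reach a vertex of any other edge of `B`
without crossing `B`. -/
lemma aux_bl {I : Type*} [DecidableEq I] {H : Set (Finset I)} (hH : IsCSS H)
    {D : NodalDatum H} {B : Set (Finset I)} (hB : IsSepBlock D B)
    {e e' a : Finset I} (he : e ∈ B) (he' : e' ∈ B) (ha : a ⊆ e) (ha1 : a.card = 1) :
    ∃ (c : Finset I) (π : List (Finset I)), IsKPath H 1 π ∧ Joins π a c ∧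
      kappa B π = 0 ∧ c.card = 1 ∧ c ⊆ e' := by
  obtain ⟨φ, hφ, hj, hsupp⟩ := hB.1.2.2.1 e he e' he'
  obtain ⟨c, π, h1, h2, h3, h4, h5⟩ := aux_walk hH hB φ hφ hsupp a e hj.1 ha ha1
  exact ⟨c, π, h1, h2, h3, h4, h5 e' hj.2⟩


open Classical in
/-- Junction count between two optional endpoints. -/
noncomputable def auxJn {I : Type*} [DecidableEq I] (B : Set (Finset I)) :
    Option (Finset I) → Option (Finset I) → ℕ
  | some a, some b => if a ∪ b ∈ B then 1 else 0
  | _, _ => 0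

open scoped Classical in
lemma aux_kappa_append' {I : Type*} [DecidableEq I] (B : Set (Finset I))
    (p q : List (Finset I)) :
    kappa B (p ++ q) = kappa B p + kappa B q + auxJn B p.getLast? q.head? := by
  rcases List.eq_nil_or_concat p with hp | ⟨p', x, hp⟩
  · subst hp; simp [aux_kappa_nil, auxJn]
  · rcases q with _ | ⟨y, q'⟩
    · simp only [List.append_nil, aux_kappa_nil, Nat.add_zero]
      cases hl : (p.getLast?) <;> simp [auxJn]
    · have hx : p.getLast? = some x := by rw [hp]; simp
      rw [aux_kappa_append B p (y :: q') x y hx rfl, hx]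
      simp only [auxJn, List.head?_cons]
      exact Nat.add_right_comm _ _ _

open scoped Classical in
lemma aux_kappa_mod {I : Type*} [DecidableEq I] (B : Set (Finset I))
    (δ ρ ε ε' : List (Finset I)) (hε : ε ≠ []) (hε' : ε' ≠ [])
    (hh : ε.head? = ε'.head?) (hl : ε.getLast? = ε'.getLast?)
    (hk : kappa B ε % 2 = kappa B ε' % 2) :
    kappa B (δ ++ ε ++ ρ) % 2 = kappa B (δ ++ ε' ++ ρ) % 2 := by
  rw [aux_kappa_append' B (δ ++ ε) ρ, aux_kappa_append' B δ ε,
    aux_kappa_append' B (δ ++ ε') ρ, aux_kappa_append' B δ ε',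
    aux_getLast?_append δ hε, aux_getLast?_append δ hε', ← hh, ← hl]
  omega

lemma aux_u1 {I : Type*} [DecidableEq I] (a b c : I) :
    ({a, b} : Finset I) ∪ {a, c} = {a, b, c} := by ext x; simp; try tauto
lemma aux_u2 {I : Type*} [DecidableEq I] (a b c : I) :
    ({a, b} : Finset I) ∪ {c, b} = {a, b, c} := by ext x; simp; try tauto
lemma aux_u3 {I : Type*} [DecidableEq I] (a b c : I) :
    ({a, c} : Finset I) ∪ {c, b} = {a, b, c} := by ext x; simp; try tauto

open scoped Classical in
/-- Triangle parity: among the three edges of a triangle over a 2-path in `H`, an even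
number belongs to the separating block, in the form needed for homotopies. -/
lemma aux_tri {I : Type*} [DecidableEq I] {H : Set (Finset I)} (hH : IsCSS H)
    {D : NodalDatum H} {B : Set (Finset I)} (hB : IsSepBlock D B) (i₁ i₂ i₃ : I)
    (hp : IsKPath H 2 [{i₁, i₃}, {i₃, i₂}]) :
    ((if ({i₁, i₂} : Finset I) ∈ B then 1 else 0) : ℕ) % 2 =
      ((if ({i₁, i₃} : Finset I) ∈ B then 1 else 0) +
        (if ({i₃, i₂} : Finset I) ∈ B then 1 else 0)) % 2 := by
  have hsubN := hB.1.2.1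
  have h13lvl : ({i₁, i₃} : Finset I) ∈ level H 2 := hp.2.1 _ (by simp)
  have h32lvl : ({i₃, i₂} : Finset I) ∈ level H 2 := hp.2.1 _ (by simp)
  have hU : ({i₁, i₃} : Finset I) ∪ {i₃, i₂} ∈ level H (2 + 1) :=
    (List.isChain_cons_cons.mp hp.2.2).1
  have h13 : i₁ ≠ i₃ := by
    intro h; subst h
    have := h13lvl.2
    simp at this
  have h32 : i₃ ≠ i₂ := by
    intro h; subst h
    have := h32lvl.2
    simp at this
  have h12 : i₁ ≠ i₂ := by
    intro h; subst h
    have h1 : ({i₁, i₃} : Finset I) ∪ {i₃, i₁} = {i₁, i₃} := by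
      ext x; simp; tauto
    have := hU.2
    rw [h1, Finset.card_pair h13] at this
    omega
  have hTeq : ({i₁, i₃} : Finset I) ∪ {i₃, i₂} = {i₁, i₂, i₃} := aux_u3 i₁ i₂ i₃
  rw [hTeq] at hU
  have hTH : ({i₁, i₂, i₃} : Finset I) ∈ H := hU.1
  have hT3 : ({i₁, i₂, i₃} : Finset I).card = 3 := hU.2
  have hsub12 : ({i₁, i₂} : Finset I) ⊆ {i₁, i₂, i₃} := by intro x hx; simp at hx ⊢; tauto
  have hsub13 : ({i₁, i₃} : Finset I) ⊆ {i₁, i₂, i₃} := by intro x hx; simp at hx ⊢; tauto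
  have hsub32 : ({i₃, i₂} : Finset I) ⊆ {i₁, i₂, i₃} := by intro x hx; simp at hx ⊢; tauto
  have hc12 : ({i₁, i₂} : Finset I).card = 2 := Finset.card_pair h12
  have hc13 : ({i₁, i₃} : Finset I).card = 2 := Finset.card_pair h13
  have hc32 : ({i₃, i₂} : Finset I).card = 2 := Finset.card_pair h32
  have h12lvl : ({i₁, i₂} : Finset I) ∈ level H 2 := ⟨hH.1 _ hTH _ hsub12, hc12⟩
  by_cases hone : ({i₁, i₂} : Finset I) ∈ B ∨ ({i₁, i₃} : Finset I) ∈ B ∨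
      ({i₃, i₂} : Finset I) ∈ B
  · have hTN : ({i₁, i₂, i₃} : Finset I) ∈ D.N := by
      rcases hone with h | h | h
      · exact (hB.2 h).2 _ hTH hsub12
      · exact (hB.2 h).2 _ hTH hsub13
      · exact (hB.2 h).2 _ hTH hsub32
    obtain ⟨z, hzT, hzcrit⟩ := aux_nedge D hTN hT3
    have crit12 := hzcrit _ hsub12 hc12
    have crit13 := hzcrit _ hsub13 hc13
    have crit32 := hzcrit _ hsub32 hc32
    have absorb : ∀ f g : Finset I, f ∈ B → g ∈ D.N → g ∈ level H 2 →
        f ∪ g ∈ level H (2 + 1) → g ∈ B := fun f g hf hg1 hg2 h =>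
      aux_absorb hB.1 hf ⟨hg1, hg2⟩ h
    simp only [Finset.mem_insert, Finset.mem_singleton] at hzT
    rcases hzT with hz | hz | hz
    · -- z = i₁ : edges {i₁,i₂} and {i₁,i₃} are the nodal ones
      have hn32 : ({i₃, i₂} : Finset I) ∉ D.N := by
        rw [crit32, hz]; simp [h13, h12]
      have hnB32 : ({i₃, i₂} : Finset I) ∉ B := fun h => hn32 (hsubN h).1
      have hU' : ({i₁, i₂} : Finset I) ∪ {i₁, i₃} ∈ level H (2 + 1) := by
        rw [show ({i₁, i₂} : Finset I) ∪ {i₁, i₃} = {i₁, i₂, i₃} from aux_u1 i₁ i₂ i₃]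
        exact hU
      have hboth : ({i₁, i₂} : Finset I) ∈ B ∧ ({i₁, i₃} : Finset I) ∈ B := by
        rcases hone with h | h | h
        · exact ⟨h, absorb _ _ h (crit13.mpr (by simp [hz])) h13lvl hU'⟩
        · refine ⟨absorb _ _ h (crit12.mpr (by simp [hz])) h12lvl ?_, h⟩
          rw [Finset.union_comm] at hU'; exact hU'
        · exact absurd h hnB32
      rw [if_pos hboth.1, if_pos hboth.2, if_neg hnB32]
    · -- z = i₂
      have hn13 : ({i₁, i₃} : Finset I) ∉ D.N := by
        rw [crit13, hz]; simp [Ne.symm h12, Ne.symm h32]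
      have hnB13 : ({i₁, i₃} : Finset I) ∉ B := fun h => hn13 (hsubN h).1
      have hU' : ({i₁, i₂} : Finset I) ∪ {i₃, i₂} ∈ level H (2 + 1) := by
        rw [show ({i₁, i₂} : Finset I) ∪ {i₃, i₂} = {i₁, i₂, i₃} from aux_u2 i₁ i₂ i₃]
        exact hU
      have hboth : ({i₁, i₂} : Finset I) ∈ B ∧ ({i₃, i₂} : Finset I) ∈ B := by
        rcases hone with h | h | h
        · exact ⟨h, absorb _ _ h (crit32.mpr (by simp [hz])) h32lvl hU'⟩
        · exact absurd h hnB13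
        · refine ⟨absorb _ _ h (crit12.mpr (by simp [hz])) h12lvl ?_, h⟩
          rw [Finset.union_comm] at hU'; exact hU'
      rw [if_pos hboth.1, if_pos hboth.2, if_neg hnB13]
    · -- z = i₃
      have hn12 : ({i₁, i₂} : Finset I) ∉ D.N := by
        rw [crit12, hz]; simp [Ne.symm h13, h32]
      have hnB12 : ({i₁, i₂} : Finset I) ∉ B := fun h => hn12 (hsubN h).1
      have hU' : ({i₁, i₃} : Finset I) ∪ {i₃, i₂} ∈ level H (2 + 1) := by
        rw [show ({i₁, i₃} : Finset I) ∪ {i₃, i₂} = {i₁, i₂, i₃} from aux_u3 i₁ i₂ i₃]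
        exact hU
      have hboth : ({i₁, i₃} : Finset I) ∈ B ∧ ({i₃, i₂} : Finset I) ∈ B := by
        rcases hone with h | h | h
        · exact absurd h hnB12
        · exact ⟨h, absorb _ _ h (crit32.mpr (by simp [hz])) h32lvl hU'⟩
        · refine ⟨absorb _ _ h (crit13.mpr (by simp [hz])) h13lvl ?_, h⟩
          rw [Finset.union_comm] at hU'; exact hU'
      rw [if_pos hboth.1, if_pos hboth.2, if_neg hnB12]
  · push_neg at hone
    rw [if_neg hone.1, if_neg hone.2.1, if_neg hone.2.2]


lemma aux_su {I : Type*} [DecidableEq I] (a b : I) :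
    ({a} ∪ {b} : Finset I) = {a, b} := by ext x; simp

open scoped Classical in
/-- Parity of the crossing number is invariant under an elementary homotopy. -/
lemma aux_hpar {I : Type*} [DecidableEq I] {H : Set (Finset I)} (hH : IsCSS H)
    {D : NodalDatum H} {B : Set (Finset I)} (hB : IsSepBlock D B)
    {γ₁ γ₂ : List (Finset I)} (h : ElemHomotopy H γ₁ γ₂) :
    kappa B γ₁ % 2 = kappa B γ₂ % 2 := by
  obtain ⟨δ, ε₁, ε₂, ρ, hpair, h1, h2⟩ := h
  subst h1; subst h2
  have core : ∀ ε ε' : List (Finset I), ElemPairCore H ε ε' →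
      kappa B (δ ++ ε ++ ρ) % 2 = kappa B (δ ++ ε' ++ ρ) % 2 := by
    intro ε ε' hc
    rcases hc with rfl | ⟨i₁, i₂, rfl, rfl⟩ | ⟨i₁, i₂, i₃, rfl, rfl, hpath⟩
    · rfl
    · refine aux_kappa_mod B δ ρ _ _ (by simp) (by simp) (by simp) (by simp) ?_
      rw [aux_kappa_cons, aux_kappa_cons,
        Finset.union_comm ({i₂} : Finset I) ({i₁} : Finset I)]
      generalize (if ({i₁} : Finset I) ∪ {i₂} ∈ B then 1 else 0) = n
      omega
    · refine aux_kappa_mod B δ ρ _ _ (by simp) (by simp) (by simp) (by simp) ?_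
      rw [aux_kappa_cons, aux_kappa_cons, aux_kappa_cons,
        aux_su i₁ i₂, aux_su i₁ i₃, aux_su i₃ i₂]
      have htri := aux_tri hH hB i₁ i₂ i₃ hpath
      generalize hg1 : (if ({i₁, i₂} : Finset I) ∈ B then 1 else 0) = n1 at htri ⊢
      generalize hg2 : (if ({i₁, i₃} : Finset I) ∈ B then 1 else 0) = n2 at htri ⊢
      generalize hg3 : (if ({i₃, i₂} : Finset I) ∈ B then 1 else 0) = n3 at htri ⊢
      omega
  rcases hpair with hc | hc
  · exact core _ _ hc
  · exact (core _ _ hc).symm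

/-- Crossing-number parity only depends on the endpoints of a 1-path. -/
lemma aux_parity {I : Type*} [DecidableEq I] {H : Set (Finset I)} (hH : IsCSS H)
    (hsc : SimplyConnected H) {D : NodalDatum H} {B : Set (Finset I)}
    (hB : IsSepBlock D B) {γ γ' : List (Finset I)}
    (hγ : IsKPath H 1 γ) (hγ' : IsKPath H 1 γ')
    (hh : γ.head? = γ'.head?) (hl : γ.getLast? = γ'.getLast?) :
    kappa B γ % 2 = kappa B γ' % 2 := by
  obtain ⟨-, hrel⟩ := hsc.2 γ γ' hγ hγ' (fun J hJ => hγ.2.1 J hJ)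
    (fun J hJ => hγ'.2.1 J hJ) hh hl
  clear hh hl hγ'
  induction hrel with
  | refl => rfl
  | tail st h ih => exact ih.trans (aux_hpar hH hB h.1)


lemma aux_mem_of_getLast? {α : Type*} {l : List α} {a : α} (h : l.getLast? = some a) :
    a ∈ l := by
  obtain ⟨hne, h2⟩ := List.mem_getLast?_eq_getLast (show a ∈ l.getLast? by rw [h]; rfl)
  rw [h2]
  exact List.getLast_mem hne

lemma aux_mem_of_head? {α : Type*} {l : List α} {a : α} (h : l.head? = some a) :
    a ∈ l := by
  cases l with
  | nil => simp at h
  | cons x t =>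
    simp only [List.head?_cons, Option.some.injEq] at h
    subst h
    exact List.mem_cons_self

open scoped Classical in
/-- Surgery: a 1-path with at least two crossings can be replaced by one with fewer
crossings and the same endpoints. -/
lemma aux_surg {I : Type*} [DecidableEq I] {H : Set (Finset I)} (hH : IsCSS H)
    {D : NodalDatum H} {B : Set (Finset I)} (hB : IsSepBlock D B)
    {γ : List (Finset I)} {X Y : Finset I} (hγ : IsKPath H 1 γ) (hj : Joins γ X Y)
    (hk : 2 ≤ kappa B γ) :
    ∃ γ' : List (Finset I), IsKPath H 1 γ' ∧ Joins γ' X Y ∧ kappa B γ' < kappa B γ := by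
  obtain ⟨α, ρ, a, b, heq, hαne, hρne, ha, hbh, habB, hκα, hκ⟩ :=
    aux_split B γ hγ (by omega)
  have hγ' : IsKPath H 1 (α ++ ρ) := heq ▸ hγ
  have hρ : IsKPath H 1 ρ := aux_path_of_append_right hγ' hρne
  have hα : IsKPath H 1 α := aux_path_of_append_left hγ' hαne
  obtain ⟨α₂, ρ₂, a₂, b₂, heq₂, hα₂ne, hρ₂ne, ha₂, hb₂, hab₂B, hκα₂, hκ₂⟩ :=
    aux_split B ρ hρ (by omega)
  have hρ'' : IsKPath H 1 (α₂ ++ ρ₂) := heq₂ ▸ hρ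
  have hρ₂ : IsKPath H 1 ρ₂ := aux_path_of_append_right hρ'' hρ₂ne
  have hα₂ : IsKPath H 1 α₂ := aux_path_of_append_left hρ'' hα₂ne
  -- endpoints bookkeeping
  have hheadα : α.head? = some X := by
    have := hj.1
    rw [heq, aux_head?_append _ hαne] at this
    exact this
  have hlastρ₂ : ρ₂.getLast? = some Y := by
    have := hj.2
    rw [heq, aux_getLast?_append _ hρne, heq₂, aux_getLast?_append _ hρ₂ne] at this
    exact this
  -- levels
  have haLvl : a ∈ level H 1 := hα.2.1 a (aux_mem_of_getLast? ha)
  have ha₂Lvl : a₂ ∈ level H 1 := hα₂.2.1 a₂ (aux_mem_of_getLast? ha₂)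
  have hb₂Lvl : b₂ ∈ level H 1 := hρ₂.2.1 b₂ (aux_mem_of_head? hb₂)
  have he'Lvl : a₂ ∪ b₂ ∈ level H 2 := (hB.1.2.1 hab₂B).2
  -- walk along the block
  obtain ⟨c, π, hπ, hπj, hπκ, hc1, hce'⟩ :=
    aux_bl hH hB habB hab₂B (Finset.subset_union_left (s₂ := b)) haLvl.2
  -- c is one of the two vertices of a₂ ∪ b₂
  have hcases : c = a₂ ∨ c = b₂ := by
    obtain ⟨x, hx⟩ := Finset.card_eq_one.mp hc1
    obtain ⟨u, hu⟩ := Finset.card_eq_one.mp ha₂Lvl.2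
    obtain ⟨w, hw⟩ := Finset.card_eq_one.mp hb₂Lvl.2
    have hxm : x ∈ a₂ ∪ b₂ := hce' (by rw [hx]; exact Finset.mem_singleton_self x)
    rw [hu, hw, Finset.mem_union, Finset.mem_singleton, Finset.mem_singleton] at hxm
    rcases hxm with h | h
    · left; rw [hx, hu, h]
    · right; rw [hx, hw, h]
  -- first composition : α followed by π
  obtain ⟨hp1, hk1, hh1, hl1⟩ := aux_comp_spec B hα hπ ha hπj.1
  rcases hcases with hc | hc
  · -- c = a₂ : cross a₂ ∪ b₂ once
    have hstep : IsKPath H 1 [a₂, b₂] := by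
      refine ⟨by simp, ?_, ?_⟩
      · intro J hJ
        rcases List.mem_cons.mp hJ with h | h
        · subst h; exact ha₂Lvl
        · simp only [List.mem_singleton] at h; subst h; exact hb₂Lvl
      · show List.IsChain _ _; rw [List.isChain_cons_cons]
        exact ⟨he'Lvl, List.isChain_singleton _⟩
    have hl1' : (α ++ π.tail).getLast? = some a₂ := by rw [hl1, hπj.2, hc]
    obtain ⟨hp2, hk2, hh2, hl2⟩ := aux_comp_spec B hp1 hstep hl1' rfl
    have hl2' : ((α ++ π.tail) ++ [a₂, b₂].tail).getLast? = some b₂ := by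
      rw [hl2]; rfl
    obtain ⟨hp3, hk3, hh3, hl3⟩ := aux_comp_spec B hp2 hρ₂ hl2' hb₂
    refine ⟨_, hp3, ⟨?_, ?_⟩, ?_⟩
    · rw [hh3, hh2, hh1, hheadα]
    · rw [hl3, hlastρ₂]
    · rw [hk3, hk2, hk1, hκα, hπκ]
      have : kappa B [a₂, b₂] = 1 := by
        rw [aux_kappa_cons, aux_kappa_single, if_pos hab₂B]
      omega
  · -- c = b₂ : skip the second crossing entirely
    have hl1' : (α ++ π.tail).getLast? = some b₂ := by rw [hl1, hπj.2, hc]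
    obtain ⟨hp2, hk2, hh2, hl2⟩ := aux_comp_spec B hp1 hρ₂ hl1' hb₂
    refine ⟨_, hp2, ⟨?_, ?_⟩, ?_⟩
    · rw [hh2, hh1, hheadα]
    · rw [hl2, hlastρ₂]
    · rw [hk2, hk1, hκα, hπκ]
      omega

/-- For a nodal separating block `B` of a simply connected combinatorial
strata structure: for every `i ∈ I` and every `{j} ∈ B_B(i)`, there is a 1-path `γ` in
`H` joining `{i}` and `{j}` with `κ_B(γ) = 1`. -/
theorem BBset_joined_with_single_crossing
    {I : Type*} [Fintype I] [DecidableEq I] (H : Set (Finset I))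
    (hH : IsCSS H) (hsc : SimplyConnected H)
    (D : NodalDatum H) (B : Set (Finset I)) (hB : IsSepBlock D B) :
    ∀ (i j : I), ({j} : Finset I) ∈ BBset H B i →
      ∃ γ : List (Finset I), IsKPath H 1 γ ∧
        Joins γ ({i} : Finset I) ({j} : Finset I) ∧ kappa B γ = 1 := by
  intro i j hmem
  obtain ⟨hlvl, γ₀, hγ₀, hj₀, hodd₀⟩ := hmem
  have main : ∀ n : ℕ, ∀ γ : List (Finset I), IsKPath H 1 γ →
      Joins γ ({i} : Finset I) ({j} : Finset I) → kappa B γ = n → Odd n →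
      ∃ γ' : List (Finset I), IsKPath H 1 γ' ∧
        Joins γ' ({i} : Finset I) ({j} : Finset I) ∧ kappa B γ' = 1 := by
    intro n
    induction n using Nat.strong_induction_on with
    | _ n ih =>
      intro γ hγ hj hkn hodd
      by_cases h1 : n = 1
      · exact ⟨γ, hγ, hj, by omega⟩
      · have hge : 2 ≤ kappa B γ := by
          have := Nat.odd_iff.mp hodd
          omega
        obtain ⟨γ', hγ', hj', hlt⟩ := aux_surg hH hB hγ hj hge
        have hpar := aux_parity hH hsc hB hγ hγ'
          (hj.1.trans hj'.1.symm) (hj.2.trans hj'.2.symm)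
        have hodd' : Odd (kappa B γ') := by
          rw [Nat.odd_iff]
          have := Nat.odd_iff.mp hodd
          omega
        exact ih (kappa B γ') (by omega) γ' hγ' hj' rfl hodd'
  exact main (kappa B γ₀) γ₀ hγ₀ hj₀ rfl hodd₀
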